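/- Let C be a category with finite products, regarded as a monoidal category via the cartesian monoidal structure (tensor = binary product, unit = terminal object ⊤). Then a morphism c : C₀ → ⊤ is a coidempotent object if and only if c is a monomorphism, i.e. if and only if C₀ is a subterminal object. Hence the preorder of coidempotent objects of (C, ×) is identified with the poset of subterminal objects of C. -/

import Mathlib

open CategoryTheory CategoryTheory.Limits MonoidalCategory

universe v u

/-- The monoidal structure on a category with a terminal object and binary products
(formerly `CategoryTheory.monoidalOfHasFiniteProducts` in Mathlib). -/
noncomputable def CategoryTheory.monoidalOfHasFiniteProducts (C : Type u) [Category.{v} C]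
    [HasTerminal C] [HasBinaryProducts C] : MonoidalCategory C :=
  (CartesianMonoidalCategory.ofChosenFiniteProducts ⟨_, terminalIsTerminal⟩
    fun X Y => ⟨_, prodIsProd X Y⟩).toMonoidalCategory

attribute [local instance] CategoryTheory.monoidalOfHasFiniteProducts

/-- Let `C` be a category with finite products, regarded as a monoidal
category via the cartesian monoidal structure (tensor = binary product, unit = terminal
object).  A morphism `c : C₀ ⟶ ⊤ = 𝟙_ C` is a coidempotent object (i.e.
`C₀ ◁ c : C₀ ⊗ C₀ ⟶ C₀ ⊗ ⊤` is an isomorphism) if and only if `c` is a monomorphism,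
i.e. iff `C₀` is a subterminal object.  Hence the preorder of coidempotent objects of
`(C, ×)` is the poset of subterminal objects of `C`. -/
theorem cartesian_coidempotent_iff_mono {C : Type u} [Category.{v} C]
    [HasTerminal C] [HasBinaryProducts C] {C₀ : C} (c : C₀ ⟶ 𝟙_ C) :
    IsIso (C₀ ◁ c) ↔ Mono c := by
  have hw : C₀ ◁ c = prod.map (𝟙 C₀) c := by
    apply Limits.prod.hom_ext
    · exact ((BinaryFan.IsLimit.lift' (prodIsProd C₀ (⊤_ C)) (prod.fst ≫ 𝟙 C₀) (prod.snd ≫ c)).2.1).trans (by exact (prod.map_fst (𝟙 C₀) c).symm)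
    · exact ((BinaryFan.IsLimit.lift' (prodIsProd C₀ (⊤_ C)) (prod.fst ≫ 𝟙 C₀) (prod.snd ≫ c)).2.2).trans (by exact (prod.map_snd (𝟙 C₀) c).symm)
  rw [hw]
  constructor
  · intro h
    have hiso : IsIso (prod.fst : C₀ ⨯ (𝟙_ C) ⟶ C₀) :=
      (show (prod.rightUnitor C₀).hom = prod.fst from rfl) ▸ (prod.rightUnitor C₀).isIso_hom
    have hfst : prod.map (𝟙 C₀) c ≫ (prod.fst : C₀ ⨯ 𝟙_ C ⟶ C₀) = prod.fst := by simp
    have hmono : Mono (prod.fst : C₀ ⨯ C₀ ⟶ C₀) := by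
      rw [← hfst]
      have : Mono (prod.map (𝟙 C₀) c) := @IsIso.mono_of_iso _ _ _ _ _ h
      exact mono_comp _ _
    constructor
    intro X f g _
    have h1 : prod.lift f g ≫ (prod.fst : C₀ ⨯ C₀ ⟶ C₀) = prod.lift f f ≫ prod.fst := by
      simp only [prod.lift_fst]
    have h2 := hmono.right_cancellation _ _ h1
    calc f = prod.lift f f ≫ prod.snd := by simp only [prod.lift_snd]
    _ = prod.lift f g ≫ prod.snd := by rw [h2]
    _ = g := by simp only [prod.lift_snd]
  · intro h
    have key : ∀ {X : C} (f g : X ⟶ C₀), f = g := fun f g => by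
      apply h.right_cancellation
      apply terminal.hom_ext
    refine ⟨prod.lift prod.fst prod.fst, ?_, ?_⟩
    · apply Limits.prod.hom_ext
      · erw [Category.assoc, prod.lift_fst, prod.map_fst, Category.comp_id, Category.id_comp]
      · erw [Category.assoc, prod.lift_snd, prod.map_fst, Category.comp_id, Category.id_comp]
        exact key _ _
    · apply Limits.prod.hom_ext
      · erw [Category.assoc, prod.map_fst, Category.comp_id, prod.lift_fst, Category.id_comp]
      · apply terminal.hom_ext
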